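/- Assume ‖Z₀‖² ≤ ‖F‖/16 and that 𝒜 satisfies the RIP of order 2r+1 with constant δ < 1. Then, for all integers t with 0 ≤ t ≤ ln(‖F‖/(16 min{k, n₁+n₂}‖Z₀‖²))/(3 ln(1 + μ‖F‖)), it holds that ‖E_t‖ ≤ (16/‖F‖) · min{k, n₁+n₂} · (1 + μ‖F‖)^{3t} · ‖Z₀‖³ ≤ ‖Z₀‖. -/

import Mathlib

open Matrix MeasureTheory ProbabilityTheory

noncomputable section

namespace AsymMatrixSensing

/-- Euclidean norm of a real vector. -/
def euclNorm {ι : Type*} [Fintype ι] (v : ι → ℝ) : ℝ :=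
  Real.sqrt (∑ i, v i ^ 2)

/-- Spectral norm of a real matrix. -/
def specNorm {ι₁ ι₂ : Type*} [Fintype ι₁] [Fintype ι₂] (M : Matrix ι₁ ι₂ ℝ) : ℝ :=
  sSup {c : ℝ | ∃ x : ι₂ → ℝ, euclNorm x ≤ 1 ∧ c = euclNorm (M.mulVec x)}

/-- Frobenius norm of a real matrix. -/
def frobNorm {ι₁ ι₂ : Type*} [Fintype ι₁] [Fintype ι₂] (M : Matrix ι₁ ι₂ ℝ) : ℝ :=
  Real.sqrt (∑ i, ∑ j, M i j ^ 2)

/-- Nuclear norm of a real matrix (characterized by duality with the spectral norm). -/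
def nucNorm {ι₁ ι₂ : Type*} [Fintype ι₁] [Fintype ι₂] (M : Matrix ι₁ ι₂ ℝ) : ℝ :=
  sSup {c : ℝ | ∃ B : Matrix ι₁ ι₂ ℝ, specNorm B ≤ 1 ∧ c = ∑ i, ∑ j, M i j * B i j}

/-- Smallest singular value `σ_{min(a,b)}(M)` of a matrix. -/
def sigmaMin {ι₁ ι₂ : Type*} [Fintype ι₁] [Fintype ι₂] (M : Matrix ι₁ ι₂ ℝ) : ℝ :=
  max (sInf {c : ℝ | ∃ x : ι₂ → ℝ, euclNorm x = 1 ∧ c = euclNorm (M.mulVec x)})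
      (sInf {c : ℝ | ∃ y : ι₁ → ℝ, euclNorm y = 1 ∧ c = euclNorm (Mᵀ.mulVec y)})

/-- Smallest nonzero singular value `σ_rank(M)`: the minimum of `‖Mx‖` over unit
vectors `x` orthogonal to the kernel of `M`. -/
def sigmaPos {ι₁ ι₂ : Type*} [Fintype ι₁] [Fintype ι₂] (M : Matrix ι₁ ι₂ ℝ) : ℝ :=
  sInf {c : ℝ | ∃ x : ι₂ → ℝ, euclNorm x = 1 ∧
    (∀ y : ι₂ → ℝ, M.mulVec y = 0 → x ⬝ᵥ y = 0) ∧ c = euclNorm (M.mulVec x)}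

/-- Condition number `κ = ‖M‖ / σ_min(M)`. -/
def condNum {ι₁ ι₂ : Type*} [Fintype ι₁] [Fintype ι₂] (M : Matrix ι₁ ι₂ ℝ) : ℝ :=
  specNorm M / sigmaPos M

/-- Trace inner product `⟨M, N⟩ = trace(Mᵀ N)`. -/
def minner {ι₁ ι₂ : Type*} [Fintype ι₁] [Fintype ι₂] (M N : Matrix ι₁ ι₂ ℝ) : ℝ :=
  ∑ i, ∑ j, M i j * N i j

/-- `P` is a matrix with orthonormal columns spanning the column space of `M`. -/
def IsOrthCol {ι κ₁ κ₂ : Type*} [Fintype ι] [Fintype κ₁] [Fintype κ₂] [DecidableEq κ₂]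
    (P : Matrix ι κ₂ ℝ) (M : Matrix ι κ₁ ℝ) : Prop :=
  Pᵀ * P = 1 ∧ (∃ C : Matrix κ₁ κ₂ ℝ, P = M * C) ∧ P * Pᵀ * M = M

/-- `L` has orthonormal columns spanning the subspace spanned by eigenvectors of the
symmetric matrix `F` corresponding to its `r` largest eigenvalues. -/
def IsTopEigenspace {ι : Type*} [Fintype ι] [DecidableEq ι] {r : ℕ} (F : Matrix ι ι ℝ)
    (L : Matrix ι (Fin r) ℝ) : Prop :=
  Lᵀ * L = 1 ∧ ∃ d : Fin r → ℝ, F * L = L * Matrix.diagonal d ∧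
    ∀ (v : ι → ℝ) (lam : ℝ), v ≠ 0 → F.mulVec v = lam • v →
      Lᵀ.mulVec v = 0 → ∀ i, lam ≤ d i

variable {n₁ n₂ m k r : ℕ}

/-- The measurement operator `𝒜`, given by `[𝒜(Z)]ᵢ = ⟨Aᵢ, Z⟩`. -/
def calA (A : Fin m → Matrix (Fin n₁) (Fin n₂) ℝ) (Z : Matrix (Fin n₁) (Fin n₂) ℝ) :
    Fin m → ℝ := fun i => minner (A i) Z

/-- The restricted isometry property of order `s` with constant `δ`. -/
def HasRIP (A : Fin m → Matrix (Fin n₁) (Fin n₂) ℝ) (s : ℕ) (δ : ℝ) : Prop :=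
  ∀ M : Matrix (Fin n₁) (Fin n₂) ℝ, M.rank ≤ s →
    (1 - δ) * frobNorm M ^ 2 ≤ ∑ i, calA A M i ^ 2 ∧
      ∑ i, calA A M i ^ 2 ≤ (1 + δ) * frobNorm M ^ 2

/-- `𝒜*𝒜`. -/
def AstarA (A : Fin m → Matrix (Fin n₁) (Fin n₂) ℝ) (Z : Matrix (Fin n₁) (Fin n₂) ℝ) :
    Matrix (Fin n₁) (Fin n₂) ℝ := ∑ i, minner (A i) Z • A i

/-- The symmetrization `sym(X) = [[0, X], [Xᵀ, 0]]`. -/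
def symMat (X : Matrix (Fin n₁) (Fin n₂) ℝ) :
    Matrix (Fin n₁ ⊕ Fin n₂) (Fin n₁ ⊕ Fin n₂) ℝ := Matrix.fromBlocks 0 X Xᵀ 0

/-- The symmetrized measurement matrices `Bᵢ = (1/√2)[[0, Aᵢ], [Aᵢᵀ, 0]]`. -/
def Bmat (A : Fin m → Matrix (Fin n₁) (Fin n₂) ℝ) (i : Fin m) :
    Matrix (Fin n₁ ⊕ Fin n₂) (Fin n₁ ⊕ Fin n₂) ℝ :=
  (Real.sqrt 2)⁻¹ • Matrix.fromBlocks 0 (A i) (A i)ᵀ 0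

/-- `ℬ*ℬ`. -/
def BstarB (A : Fin m → Matrix (Fin n₁) (Fin n₂) ℝ)
    (S : Matrix (Fin n₁ ⊕ Fin n₂) (Fin n₁ ⊕ Fin n₂) ℝ) :
    Matrix (Fin n₁ ⊕ Fin n₂) (Fin n₁ ⊕ Fin n₂) ℝ :=
  ∑ i, minner (Bmat A i) S • Bmat A i

/-- The factorized gradient descent iterates `(V_t, W_t)`. -/
def iter (A : Fin m → Matrix (Fin n₁) (Fin n₂) ℝ) (X : Matrix (Fin n₁) (Fin n₂) ℝ)
    (μ : ℝ) (V₀ : Matrix (Fin n₁) (Fin k) ℝ) (W₀ : Matrix (Fin n₂) (Fin k) ℝ) :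
    ℕ → Matrix (Fin n₁) (Fin k) ℝ × Matrix (Fin n₂) (Fin k) ℝ
  | 0 => (V₀, W₀)
  | t + 1 =>
    let p := iter A X μ V₀ W₀ t
    let G := AstarA A (p.1 * p.2ᵀ - X)
    (p.1 - μ • (G * p.2), p.2 - μ • (Gᵀ * p.1))

/-- The vertical stacking `(1/√2)[V; W]`. -/
def Zstack {κ : ℕ} (V : Matrix (Fin n₁) (Fin κ) ℝ) (W : Matrix (Fin n₂) (Fin κ) ℝ) :
    Matrix (Fin n₁ ⊕ Fin n₂) (Fin κ) ℝ :=
  (Real.sqrt 2)⁻¹ • Matrix.fromRows V W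

/-- `Z_t = (1/√2)[V_t; W_t]`. -/
def Zit (A : Fin m → Matrix (Fin n₁) (Fin n₂) ℝ) (X : Matrix (Fin n₁) (Fin n₂) ℝ)
    (μ : ℝ) (V₀ : Matrix (Fin n₁) (Fin k) ℝ) (W₀ : Matrix (Fin n₂) (Fin k) ℝ) (t : ℕ) :
    Matrix (Fin n₁ ⊕ Fin n₂) (Fin k) ℝ :=
  Zstack (iter A X μ V₀ W₀ t).1 (iter A X μ V₀ W₀ t).2

/-- `Z̃_t = (1/√2)[V_t; −W_t]`. -/
def Ztil (A : Fin m → Matrix (Fin n₁) (Fin n₂) ℝ) (X : Matrix (Fin n₁) (Fin n₂) ℝ)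
    (μ : ℝ) (V₀ : Matrix (Fin n₁) (Fin k) ℝ) (W₀ : Matrix (Fin n₂) (Fin k) ℝ) (t : ℕ) :
    Matrix (Fin n₁ ⊕ Fin n₂) (Fin k) ℝ :=
  Zstack (iter A X μ V₀ W₀ t).1 (-(iter A X μ V₀ W₀ t).2)

/-- `Δ_t = (Id − ℬ*ℬ)(Z_tZ_tᵀ − Z̃_tZ̃_tᵀ − sym(X))`. -/
def Δit (A : Fin m → Matrix (Fin n₁) (Fin n₂) ℝ) (X : Matrix (Fin n₁) (Fin n₂) ℝ)
    (μ : ℝ) (V₀ : Matrix (Fin n₁) (Fin k) ℝ) (W₀ : Matrix (Fin n₂) (Fin k) ℝ) (t : ℕ) :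
    Matrix (Fin n₁ ⊕ Fin n₂) (Fin n₁ ⊕ Fin n₂) ℝ :=
  let D := Zit A X μ V₀ W₀ t * (Zit A X μ V₀ W₀ t)ᵀ
    - Ztil A X μ V₀ W₀ t * (Ztil A X μ V₀ W₀ t)ᵀ - symMat X
  D - BstarB A D

/-- The block diagonal matrix `diag(Id_{n₁}, −Id_{n₂})`. -/
def flipSign (n₁ n₂ : ℕ) : Matrix (Fin n₁ ⊕ Fin n₂) (Fin n₁ ⊕ Fin n₂) ℝ :=
  Matrix.fromBlocks 1 0 0 (-1)

/-- Product Gaussian measure modelling the random initialization pair `(V, W)`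
with i.i.d. standard Gaussian entries. -/
def gaussPair (n₁ n₂ k : ℕ) :
    Measure ((Fin n₁ → Fin k → ℝ) × (Fin n₂ → Fin k → ℝ)) :=
  (Measure.pi fun _ : Fin n₁ => Measure.pi fun _ : Fin k => gaussianReal 0 1).prod
    (Measure.pi fun _ : Fin n₂ => Measure.pi fun _ : Fin k => gaussianReal 0 1)

section EuclBasics

variable {ι ι₁ ι₂ : Type*} [Fintype ι] [Fintype ι₁] [Fintype ι₂]

lemma euclNorm_nonneg (v : ι → ℝ) : 0 ≤ euclNorm v := Real.sqrt_nonneg _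

lemma euclNorm_sq (v : ι → ℝ) : euclNorm v ^ 2 = ∑ i, v i ^ 2 :=
  Real.sq_sqrt (Finset.sum_nonneg fun i _ => sq_nonneg _)

lemma euclNorm_zero : euclNorm (0 : ι → ℝ) = 0 := by
  simp [euclNorm]

lemma euclNorm_eq_zero {v : ι → ℝ} (h : euclNorm v = 0) : v = 0 := by
  have h2 : ∑ i, v i ^ 2 = 0 := by
    have := euclNorm_sq v
    rw [h] at this; simpa using this.symm
  have := (Finset.sum_eq_zero_iff_of_nonneg (fun i _ => sq_nonneg (v i))).mp h2
  funext i
  have := this i (Finset.mem_univ i)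
  exact pow_eq_zero_iff (by norm_num) |>.mp this

lemma le_of_sq_le_sq' {a b : ℝ} (h : a ^ 2 ≤ b ^ 2) (hb : 0 ≤ b) : a ≤ b := by
  nlinarith

lemma euclNorm_smul (c : ℝ) (v : ι → ℝ) : euclNorm (c • v) = |c| * euclNorm v := by
  unfold euclNorm
  rw [← Real.sqrt_sq_eq_abs, ← Real.sqrt_mul (sq_nonneg c), Finset.mul_sum]
  congr 1
  refine Finset.sum_congr rfl fun i _ => ?_
  simp [mul_pow]

lemma euclNorm_le_of_sq_le_sq {v : ι₁ → ℝ} {w : ι₂ → ℝ}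
    (h : ∑ i, v i ^ 2 ≤ ∑ i, w i ^ 2) : euclNorm v ≤ euclNorm w :=
  Real.sqrt_le_sqrt h

lemma abs_dotProduct_le (v w : ι → ℝ) : |v ⬝ᵥ w| ≤ euclNorm v * euclNorm w := by
  have h := Finset.sum_mul_sq_le_sq_mul_sq Finset.univ v w
  have : (v ⬝ᵥ w) ^ 2 ≤ (euclNorm v * euclNorm w) ^ 2 := by
    rw [mul_pow, euclNorm_sq, euclNorm_sq]
    simpa [dotProduct] using h
  have hnn : 0 ≤ euclNorm v * euclNorm w :=
    mul_nonneg (euclNorm_nonneg v) (euclNorm_nonneg w)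
  exact le_of_sq_le_sq' (by simpa [sq_abs] using this) hnn

lemma dotProduct_le (v w : ι → ℝ) : v ⬝ᵥ w ≤ euclNorm v * euclNorm w :=
  (le_abs_self _).trans (abs_dotProduct_le v w)

lemma dotProduct_self_eq_sq (v : ι → ℝ) : v ⬝ᵥ v = euclNorm v ^ 2 := by
  rw [euclNorm_sq]; simp [dotProduct, sq]

lemma euclNorm_add_le (v w : ι → ℝ) : euclNorm (v + w) ≤ euclNorm v + euclNorm w := by
  have hvw : euclNorm (v + w) ^ 2 ≤ (euclNorm v + euclNorm w) ^ 2 := by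
    rw [euclNorm_sq]
    have expand : ∑ i, (v + w) i ^ 2 = v ⬝ᵥ v + 2 * (v ⬝ᵥ w) + w ⬝ᵥ w := by
      simp only [Pi.add_apply, dotProduct, Finset.mul_sum]
      rw [← Finset.sum_add_distrib, ← Finset.sum_add_distrib]
      refine Finset.sum_congr rfl fun i _ => by ring
    rw [expand, dotProduct_self_eq_sq, dotProduct_self_eq_sq]
    have := dotProduct_le v w
    nlinarith [euclNorm_nonneg v, euclNorm_nonneg w]
  exact le_of_sq_le_sq' hvw (add_nonneg (euclNorm_nonneg v) (euclNorm_nonneg w))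

lemma euclNorm_single (j : ι) [DecidableEq ι] : euclNorm (Pi.single j (1:ℝ)) = 1 := by
  unfold euclNorm
  rw [Finset.sum_eq_single j]
  · simp
  · intro b _ hb; simp [Pi.single_eq_of_ne hb]
  · intro h; exact absurd (Finset.mem_univ j) h

end EuclBasics

section SpecBasics

variable {ι ι₁ ι₂ ι₃ : Type*} [Fintype ι] [Fintype ι₁] [Fintype ι₂] [Fintype ι₃]

lemma specSet_def (M : Matrix ι₁ ι₂ ℝ) :
    specNorm M = sSup {c : ℝ | ∃ x : ι₂ → ℝ, euclNorm x ≤ 1 ∧ c = euclNorm (M.mulVec x)} := rfl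

lemma euclNorm_mulVec_le_frob (M : Matrix ι₁ ι₂ ℝ) (x : ι₂ → ℝ) :
    euclNorm (M.mulVec x) ≤ frobNorm M * euclNorm x := by
  have h : euclNorm (M.mulVec x) ^ 2 ≤ (frobNorm M * euclNorm x) ^ 2 := by
    rw [euclNorm_sq, mul_pow, euclNorm_sq]
    have hf : frobNorm M ^ 2 = ∑ i, ∑ j, M i j ^ 2 :=
      Real.sq_sqrt (Finset.sum_nonneg fun i _ => Finset.sum_nonneg fun j _ => sq_nonneg _)
    rw [hf, Finset.sum_mul]
    refine Finset.sum_le_sum fun i _ => ?_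
    simpa [Matrix.mulVec, dotProduct] using
      Finset.sum_mul_sq_le_sq_mul_sq Finset.univ (fun j => M i j) x
  exact le_of_sq_le_sq' h (mul_nonneg (Real.sqrt_nonneg _) (euclNorm_nonneg _))

lemma specSet_bddAbove (M : Matrix ι₁ ι₂ ℝ) :
    BddAbove {c : ℝ | ∃ x : ι₂ → ℝ, euclNorm x ≤ 1 ∧ c = euclNorm (M.mulVec x)} := by
  refine ⟨frobNorm M, ?_⟩
  rintro c ⟨x, hx, rfl⟩
  calc euclNorm (M.mulVec x) ≤ frobNorm M * euclNorm x := euclNorm_mulVec_le_frob M x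
    _ ≤ frobNorm M * 1 := by
        exact mul_le_mul_of_nonneg_left hx (Real.sqrt_nonneg _)
    _ = frobNorm M := mul_one _

lemma euclNorm_mulVec_le_specNorm (M : Matrix ι₁ ι₂ ℝ) {x : ι₂ → ℝ} (hx : euclNorm x ≤ 1) :
    euclNorm (M.mulVec x) ≤ specNorm M :=
  le_csSup (specSet_bddAbove M) ⟨x, hx, rfl⟩

lemma specNorm_nonneg (M : Matrix ι₁ ι₂ ℝ) : 0 ≤ specNorm M := by
  have : euclNorm (M.mulVec 0) ≤ specNorm M :=
    euclNorm_mulVec_le_specNorm M (by rw [euclNorm_zero]; norm_num)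
  simpa [Matrix.mulVec_zero, euclNorm_zero] using this

lemma specNorm_le (M : Matrix ι₁ ι₂ ℝ) {c : ℝ} (hc : 0 ≤ c)
    (h : ∀ x : ι₂ → ℝ, euclNorm x ≤ 1 → euclNorm (M.mulVec x) ≤ c) : specNorm M ≤ c := by
  refine Real.sSup_le ?_ hc
  rintro b ⟨x, hx, rfl⟩
  exact h x hx

lemma specNorm_zero : specNorm (0 : Matrix ι₁ ι₂ ℝ) = 0 :=
  le_antisymm (specNorm_le _ le_rfl fun x _ => by simp [Matrix.zero_mulVec, euclNorm_zero])
    (specNorm_nonneg _)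

lemma euclNorm_mulVec_le (M : Matrix ι₁ ι₂ ℝ) (x : ι₂ → ℝ) :
    euclNorm (M.mulVec x) ≤ specNorm M * euclNorm x := by
  rcases eq_or_ne (euclNorm x) 0 with h0 | h0
  · rw [euclNorm_eq_zero h0]
    simp [Matrix.mulVec_zero, euclNorm_zero]
  · have hpos : 0 < euclNorm x := lt_of_le_of_ne (euclNorm_nonneg x) (Ne.symm h0)
    have hu : euclNorm ((euclNorm x)⁻¹ • x) = 1 := by
      rw [euclNorm_smul, abs_of_nonneg (inv_nonneg.mpr hpos.le), inv_mul_cancel₀ h0]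
    have := euclNorm_mulVec_le_specNorm M hu.le
    rw [Matrix.mulVec_smul, euclNorm_smul, abs_of_nonneg (inv_nonneg.mpr hpos.le)] at this
    calc euclNorm (M.mulVec x) = euclNorm x * ((euclNorm x)⁻¹ * euclNorm (M.mulVec x)) := by
          field_simp
      _ ≤ euclNorm x * specNorm M := mul_le_mul_of_nonneg_left this hpos.le
      _ = specNorm M * euclNorm x := mul_comm _ _

lemma specNorm_eq_zero {M : Matrix ι₁ ι₂ ℝ} (h : specNorm M = 0) : M = 0 := by
  have hcol : ∀ x : ι₂ → ℝ, M.mulVec x = 0 := by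
    intro x
    have := euclNorm_mulVec_le M x
    rw [h, zero_mul] at this
    exact euclNorm_eq_zero (le_antisymm this (euclNorm_nonneg _))
  ext i j
  classical
  have := congrFun (hcol (Pi.single j 1)) i
  simpa [Matrix.mulVec_single] using this

lemma specNorm_mul_le (M : Matrix ι₁ ι₂ ℝ) (N : Matrix ι₂ ι₃ ℝ) :
    specNorm (M * N) ≤ specNorm M * specNorm N := by
  refine specNorm_le _ (mul_nonneg (specNorm_nonneg _) (specNorm_nonneg _)) fun x hx => ?_
  rw [← Matrix.mulVec_mulVec]
  calc euclNorm (M.mulVec (N.mulVec x)) ≤ specNorm M * euclNorm (N.mulVec x) :=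
        euclNorm_mulVec_le M _
    _ ≤ specNorm M * (specNorm N * euclNorm x) :=
        mul_le_mul_of_nonneg_left ((euclNorm_mulVec_le N x).trans
          (by nlinarith [specNorm_nonneg N, euclNorm_nonneg x])) (specNorm_nonneg M)
    _ ≤ specNorm M * (specNorm N * 1) :=
        mul_le_mul_of_nonneg_left (mul_le_mul_of_nonneg_left hx (specNorm_nonneg N))
          (specNorm_nonneg M)
    _ = specNorm M * specNorm N := by ring

lemma specNorm_add_le (M N : Matrix ι₁ ι₂ ℝ) :
    specNorm (M + N) ≤ specNorm M + specNorm N := by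
  refine specNorm_le _ (add_nonneg (specNorm_nonneg _) (specNorm_nonneg _)) fun x hx => ?_
  rw [Matrix.add_mulVec]
  calc euclNorm (M.mulVec x + N.mulVec x) ≤ euclNorm (M.mulVec x) + euclNorm (N.mulVec x) :=
        euclNorm_add_le _ _
    _ ≤ specNorm M + specNorm N :=
        add_le_add (euclNorm_mulVec_le_specNorm M hx) (euclNorm_mulVec_le_specNorm N hx)

lemma specNorm_smul_le (c : ℝ) (M : Matrix ι₁ ι₂ ℝ) :
    specNorm (c • M) ≤ |c| * specNorm M := by
  refine specNorm_le _ (mul_nonneg (abs_nonneg c) (specNorm_nonneg _)) fun x hx => ?_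
  rw [Matrix.smul_mulVec, euclNorm_smul]
  exact mul_le_mul_of_nonneg_left (euclNorm_mulVec_le_specNorm M hx) (abs_nonneg c)

lemma specNorm_one_le [DecidableEq ι] : specNorm (1 : Matrix ι ι ℝ) ≤ 1 := by
  refine specNorm_le _ zero_le_one fun x hx => ?_
  rwa [Matrix.one_mulVec]

lemma specNorm_transpose_le (M : Matrix ι₁ ι₂ ℝ) : specNorm Mᵀ ≤ specNorm M := by
  refine specNorm_le _ (specNorm_nonneg M) fun y hy => ?_
  set t := euclNorm (Mᵀ.mulVec y) with ht
  rcases eq_or_ne t 0 with h0 | h0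
  · rw [h0]; exact specNorm_nonneg M
  have htpos : 0 < t := lt_of_le_of_ne (euclNorm_nonneg _) (Ne.symm h0)
  have hsq : t ^ 2 = (Mᵀ.mulVec y) ⬝ᵥ (Mᵀ.mulVec y) := (dotProduct_self_eq_sq _).symm
  have hswap : (Mᵀ.mulVec y) ⬝ᵥ (Mᵀ.mulVec y) = y ⬝ᵥ (M.mulVec (Mᵀ.mulVec y)) := by
    rw [Matrix.dotProduct_mulVec, ← Matrix.mulVec_transpose, Matrix.transpose_transpose]
    exact dotProduct_comm _ _
  have hbound : y ⬝ᵥ (M.mulVec (Mᵀ.mulVec y)) ≤ 1 * (specNorm M * t) := by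
    calc y ⬝ᵥ (M.mulVec (Mᵀ.mulVec y)) ≤ euclNorm y * euclNorm (M.mulVec (Mᵀ.mulVec y)) :=
          dotProduct_le _ _
      _ ≤ 1 * (specNorm M * t) := by
          refine mul_le_mul hy ?_ (euclNorm_nonneg _) zero_le_one
          exact euclNorm_mulVec_le M _
  have : t ^ 2 ≤ specNorm M * t := by rw [hsq, hswap]; linarith
  nlinarith

lemma specNorm_transpose (M : Matrix ι₁ ι₂ ℝ) : specNorm Mᵀ = specNorm M :=
  le_antisymm (specNorm_transpose_le M)
    (by simpa using specNorm_transpose_le Mᵀ)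

lemma euclNorm_col_le_specNorm [DecidableEq ι₂] (M : Matrix ι₁ ι₂ ℝ) (j : ι₂) :
    euclNorm (fun i => M i j) ≤ specNorm M := by
  classical
  have := euclNorm_mulVec_le_specNorm M (x := Pi.single j 1) (by rw [euclNorm_single]; )
  simp [Matrix.mulVec_single] at this
  exact this

end SpecBasics


section Blocks

variable {ι₁ ι₂ κ : Type*} [Fintype ι₁] [Fintype ι₂] [Fintype κ]

lemma euclNorm_sq_sum_type (v : ι₁ ⊕ ι₂ → ℝ) :
    euclNorm v ^ 2 = euclNorm (v ∘ Sum.inl) ^ 2 + euclNorm (v ∘ Sum.inr) ^ 2 := by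
  rw [euclNorm_sq, euclNorm_sq, euclNorm_sq, Fintype.sum_sum_type]
  rfl

lemma specNorm_fromRows_left (V : Matrix ι₁ κ ℝ) (W : Matrix ι₂ κ ℝ) :
    specNorm V ≤ specNorm (Matrix.fromRows V W) := by
  refine specNorm_le _ (specNorm_nonneg _) fun x hx => ?_
  refine le_trans ?_ (euclNorm_mulVec_le_specNorm (Matrix.fromRows V W) hx)
  refine euclNorm_le_of_sq_le_sq ?_
  rw [Fintype.sum_sum_type]
  have h1 : ∑ i : ι₁, ((Matrix.fromRows V W).mulVec x (Sum.inl i)) ^ 2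
      = ∑ i : ι₁, (V.mulVec x i) ^ 2 := by
    refine Finset.sum_congr rfl fun i _ => ?_
    simp [Matrix.fromRows_mulVec]
  rw [h1]
  have h2 : 0 ≤ ∑ i : ι₂, ((Matrix.fromRows V W).mulVec x (Sum.inr i)) ^ 2 :=
    Finset.sum_nonneg fun i _ => sq_nonneg _
  linarith

lemma specNorm_fromRows_right (V : Matrix ι₁ κ ℝ) (W : Matrix ι₂ κ ℝ) :
    specNorm W ≤ specNorm (Matrix.fromRows V W) := by
  refine specNorm_le _ (specNorm_nonneg _) fun x hx => ?_
  refine le_trans ?_ (euclNorm_mulVec_le_specNorm (Matrix.fromRows V W) hx)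
  refine euclNorm_le_of_sq_le_sq ?_
  rw [Fintype.sum_sum_type]
  have h1 : ∑ i : ι₂, ((Matrix.fromRows V W).mulVec x (Sum.inr i)) ^ 2
      = ∑ i : ι₂, (W.mulVec x i) ^ 2 := by
    refine Finset.sum_congr rfl fun i _ => ?_
    simp [Matrix.fromRows_mulVec]
  rw [h1]
  have h2 : 0 ≤ ∑ i : ι₁, ((Matrix.fromRows V W).mulVec x (Sum.inl i)) ^ 2 :=
    Finset.sum_nonneg fun i _ => sq_nonneg _
  linarith

end Blocks

section SymBlocks

variable {n₁ n₂ : ℕ}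

lemma symMat_mulVec_inl (C : Matrix (Fin n₁) (Fin n₂) ℝ) (x : Fin n₁ ⊕ Fin n₂ → ℝ) (i : Fin n₁) :
    (symMat C).mulVec x (Sum.inl i) = C.mulVec (x ∘ Sum.inr) i := by
  simp [symMat, Matrix.mulVec, dotProduct, Fintype.sum_sum_type, Function.comp]

lemma symMat_mulVec_inr (C : Matrix (Fin n₁) (Fin n₂) ℝ) (x : Fin n₁ ⊕ Fin n₂ → ℝ) (j : Fin n₂) :
    (symMat C).mulVec x (Sum.inr j) = Cᵀ.mulVec (x ∘ Sum.inl) j := by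
  simp [symMat, Matrix.mulVec, dotProduct, Fintype.sum_sum_type, Function.comp]

lemma specNorm_symMat_le (C : Matrix (Fin n₁) (Fin n₂) ℝ) :
    specNorm (symMat C) ≤ specNorm C := by
  refine specNorm_le _ (specNorm_nonneg _) fun x hx => ?_
  have hsq : euclNorm ((symMat C).mulVec x) ^ 2 ≤ (specNorm C * 1) ^ 2 := by
    rw [euclNorm_sq_sum_type]
    have e1 : euclNorm ((symMat C).mulVec x ∘ Sum.inl) = euclNorm (C.mulVec (x ∘ Sum.inr)) := by
      congr 1; funext i; exact symMat_mulVec_inl C x i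
    have e2 : euclNorm ((symMat C).mulVec x ∘ Sum.inr) = euclNorm (Cᵀ.mulVec (x ∘ Sum.inl)) := by
      congr 1; funext j; exact symMat_mulVec_inr C x j
    rw [e1, e2]
    have b1 : euclNorm (C.mulVec (x ∘ Sum.inr)) ^ 2
        ≤ specNorm C ^ 2 * euclNorm (x ∘ Sum.inr) ^ 2 := by
      rw [← mul_pow]
      have := euclNorm_mulVec_le C (x ∘ Sum.inr)
      exact pow_le_pow_left₀ (euclNorm_nonneg _) this 2
    have b2 : euclNorm (Cᵀ.mulVec (x ∘ Sum.inl)) ^ 2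
        ≤ specNorm C ^ 2 * euclNorm (x ∘ Sum.inl) ^ 2 := by
      rw [← mul_pow]
      have h := euclNorm_mulVec_le Cᵀ (x ∘ Sum.inl)
      rw [specNorm_transpose] at h
      exact pow_le_pow_left₀ (euclNorm_nonneg _) h 2
    have hx2 : euclNorm (x ∘ Sum.inl) ^ 2 + euclNorm (x ∘ Sum.inr) ^ 2 ≤ 1 := by
      have := euclNorm_sq_sum_type x
      have hx1 : euclNorm x ^ 2 ≤ 1 := by
        have := pow_le_pow_left₀ (euclNorm_nonneg x) hx 2
        simpa using this
      linarith
    have hC2 : 0 ≤ specNorm C ^ 2 := sq_nonneg _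
    calc euclNorm (C.mulVec (x ∘ Sum.inr)) ^ 2 + euclNorm (Cᵀ.mulVec (x ∘ Sum.inl)) ^ 2
        ≤ specNorm C ^ 2 * (euclNorm (x ∘ Sum.inr) ^ 2 + euclNorm (x ∘ Sum.inl) ^ 2) := by
          rw [mul_add]; exact add_le_add b1 b2
      _ ≤ specNorm C ^ 2 * 1 := by
          refine mul_le_mul_of_nonneg_left ?_ hC2; linarith
      _ = (specNorm C * 1) ^ 2 := by ring
  have := le_of_sq_le_sq' hsq (mul_nonneg (specNorm_nonneg C) zero_le_one)
  simpa using this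

end SymBlocks


section MinnerBasics

variable {ι₁ ι₂ : Type*} [Fintype ι₁] [Fintype ι₂]

lemma minner_add_right (M N P : Matrix ι₁ ι₂ ℝ) :
    minner M (N + P) = minner M N + minner M P := by
  unfold minner
  rw [← Finset.sum_add_distrib]
  refine Finset.sum_congr rfl fun i _ => ?_
  rw [← Finset.sum_add_distrib]
  refine Finset.sum_congr rfl fun j _ => ?_
  simp [mul_add]

lemma minner_sub_right (M N P : Matrix ι₁ ι₂ ℝ) :
    minner M (N - P) = minner M N - minner M P := by
  unfold minner
  rw [← Finset.sum_sub_distrib]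
  refine Finset.sum_congr rfl fun i _ => ?_
  rw [← Finset.sum_sub_distrib]
  refine Finset.sum_congr rfl fun j _ => ?_
  simp [mul_sub]

lemma minner_smul_right (c : ℝ) (M N : Matrix ι₁ ι₂ ℝ) :
    minner M (c • N) = c * minner M N := by
  unfold minner
  rw [Finset.mul_sum]
  refine Finset.sum_congr rfl fun i _ => ?_
  rw [Finset.mul_sum]
  refine Finset.sum_congr rfl fun j _ => ?_
  simp [Matrix.smul_apply]; ring

lemma minner_vecMulVec (C : Matrix ι₁ ι₂ ℝ) (y : ι₁ → ℝ) (x : ι₂ → ℝ) :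
    minner C (Matrix.vecMulVec y x) = y ⬝ᵥ C.mulVec x := by
  unfold minner
  simp only [Matrix.vecMulVec_apply, dotProduct, Matrix.mulVec, Finset.mul_sum]
  refine Finset.sum_congr rfl fun i _ => Finset.sum_congr rfl fun j _ => by ring

lemma abs_minner_le (M N : Matrix ι₁ ι₂ ℝ) : |minner M N| ≤ frobNorm M * frobNorm N := by
  have key : minner M N ^ 2 ≤ (frobNorm M * frobNorm N) ^ 2 := by
    have hM : frobNorm M ^ 2 = ∑ p : ι₁ × ι₂, M p.1 p.2 ^ 2 := by
      unfold frobNorm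
      rw [Real.sq_sqrt (show (0:ℝ) ≤ ∑ i, ∑ j, M i j ^ 2 from Finset.sum_nonneg fun i _ => Finset.sum_nonneg fun j _ => sq_nonneg _)]
      rw [← Finset.sum_product']
      rfl
    have hN : frobNorm N ^ 2 = ∑ p : ι₁ × ι₂, N p.1 p.2 ^ 2 := by
      unfold frobNorm
      rw [Real.sq_sqrt (show (0:ℝ) ≤ ∑ i, ∑ j, N i j ^ 2 from Finset.sum_nonneg fun i _ => Finset.sum_nonneg fun j _ => sq_nonneg _)]
      rw [← Finset.sum_product']
      rfl
    have hMN : minner M N = ∑ p : ι₁ × ι₂, M p.1 p.2 * N p.1 p.2 := by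
      unfold minner
      rw [← Finset.sum_product']
      rfl
    rw [mul_pow, hM, hN, hMN]
    exact Finset.sum_mul_sq_le_sq_mul_sq Finset.univ _ _
  have hnn : 0 ≤ frobNorm M * frobNorm N := mul_nonneg (Real.sqrt_nonneg _) (Real.sqrt_nonneg _)
  exact le_of_sq_le_sq' (by simpa [sq_abs] using key) hnn

lemma frobNorm_sq (M : Matrix ι₁ ι₂ ℝ) : frobNorm M ^ 2 = ∑ i, ∑ j, M i j ^ 2 :=
  Real.sq_sqrt (Finset.sum_nonneg fun i _ => Finset.sum_nonneg fun j _ => sq_nonneg _)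

lemma frobNorm_nonneg (M : Matrix ι₁ ι₂ ℝ) : 0 ≤ frobNorm M := Real.sqrt_nonneg _

lemma frobNorm_vecMulVec (u : ι₁ → ℝ) (v : ι₂ → ℝ) :
    frobNorm (Matrix.vecMulVec u v) = euclNorm u * euclNorm v := by
  unfold frobNorm euclNorm
  rw [← Real.sqrt_mul (Finset.sum_nonneg fun i _ => sq_nonneg _)]
  congr 1
  rw [Finset.sum_mul]
  refine Finset.sum_congr rfl fun i _ => ?_
  rw [Finset.mul_sum]
  refine Finset.sum_congr rfl fun j _ => ?_
  simp [Matrix.vecMulVec_apply, mul_pow]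

lemma frobNorm_eq_zero {M : Matrix ι₁ ι₂ ℝ} (h : frobNorm M = 0) : M = 0 := by
  have h2 : ∑ i, ∑ j, M i j ^ 2 = 0 := by
    have := frobNorm_sq M
    rw [h] at this
    simpa using this.symm
  ext i j
  have hi := (Finset.sum_eq_zero_iff_of_nonneg
    (fun i _ => Finset.sum_nonneg fun j _ => sq_nonneg (M i j))).mp h2 i (Finset.mem_univ i)
  have hj := (Finset.sum_eq_zero_iff_of_nonneg (fun j _ => sq_nonneg (M i j))).mp hi j
    (Finset.mem_univ j)
  simpa using (pow_eq_zero_iff (two_ne_zero)).mp hj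

end MinnerBasics

section RankBasics

variable {ι₁ ι₂ : Type*} [Fintype ι₁] [Fintype ι₂] [DecidableEq ι₂]

lemma matrix_rank_add_le (M N : Matrix ι₁ ι₂ ℝ) : (M + N).rank ≤ M.rank + N.rank := by
  classical
  unfold Matrix.rank
  have hr : LinearMap.range (M + N).mulVecLin
      ≤ LinearMap.range M.mulVecLin ⊔ LinearMap.range N.mulVecLin := by
    rintro y ⟨x, rfl⟩
    rw [Matrix.mulVecLin_add]
    exact Submodule.add_mem_sup ⟨x, rfl⟩ ⟨x, rfl⟩
  calc Module.finrank ℝ (LinearMap.range (M + N).mulVecLin)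
      ≤ Module.finrank ℝ ↥(LinearMap.range M.mulVecLin ⊔ LinearMap.range N.mulVecLin) :=
        Submodule.finrank_mono hr
    _ ≤ _ := Submodule.finrank_add_le_finrank_add_finrank _ _

lemma matrix_rank_smul_le (c : ℝ) (M : Matrix ι₁ ι₂ ℝ) : (c • M).rank ≤ M.rank := by
  classical
  have : c • M = (c • (1 : Matrix ι₁ ι₁ ℝ)) * M := by
    rw [Matrix.smul_mul, Matrix.one_mul]
  rw [this]
  exact Matrix.rank_mul_le_right _ _

lemma matrix_rank_vecMulVec_le_one (u : ι₁ → ℝ) (v : ι₂ → ℝ) :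
    (Matrix.vecMulVec u v).rank ≤ 1 := by
  classical
  rw [Matrix.vecMulVec_eq (Fin 1)]
  calc (Matrix.replicateCol (Fin 1) u * Matrix.replicateRow (Fin 1) v).rank
      ≤ (Matrix.replicateRow (Fin 1) v).rank := Matrix.rank_mul_le_right _ _
    _ ≤ Fintype.card (Fin 1) := Matrix.rank_le_card_height _
    _ = 1 := by simp

lemma matrix_rank_pos_of_ne_zero {M : Matrix ι₁ ι₂ ℝ} (h : M ≠ 0) : 1 ≤ M.rank := by
  by_contra hc
  push_neg at hc
  interval_cases hM : M.rank
  · apply h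
    unfold Matrix.rank at hM
    have : LinearMap.range M.mulVecLin = ⊥ := Submodule.finrank_eq_zero.mp hM
    have hz : ∀ x, M.mulVec x = 0 := by
      intro x
      have : M.mulVecLin x ∈ (⊥ : Submodule ℝ (ι₁ → ℝ)) := this ▸ LinearMap.mem_range_self _ x
      simpa [Matrix.mulVecLin] using this
    ext i j
    have := congrFun (hz (Pi.single j 1)) i
    simpa [Matrix.mulVec_single] using this

end RankBasics


section FrobMore

variable {ι₁ ι₂ : Type*} [Fintype ι₁] [Fintype ι₂]

lemma minner_zero_right (M : Matrix ι₁ ι₂ ℝ) : minner M 0 = 0 := by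
  simp [minner]

lemma minner_neg_right (M N : Matrix ι₁ ι₂ ℝ) : minner M (-N) = -minner M N := by
  simp [minner, Finset.sum_neg_distrib]

lemma frobNorm_smul (c : ℝ) (M : Matrix ι₁ ι₂ ℝ) : frobNorm (c • M) = |c| * frobNorm M := by
  unfold frobNorm
  rw [← Real.sqrt_sq_eq_abs,
    ← Real.sqrt_mul (sq_nonneg c)]
  congr 1
  rw [Finset.mul_sum]
  refine Finset.sum_congr rfl fun i _ => ?_
  rw [Finset.mul_sum]
  refine Finset.sum_congr rfl fun j _ => ?_
  simp [Matrix.smul_apply, mul_pow]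

lemma frobNorm_sq_add (P Q : Matrix ι₁ ι₂ ℝ) :
    frobNorm (P + Q) ^ 2 = frobNorm P ^ 2 + frobNorm Q ^ 2 + 2 * minner P Q := by
  rw [frobNorm_sq, frobNorm_sq, frobNorm_sq]
  unfold minner
  rw [Finset.mul_sum, ← Finset.sum_add_distrib, ← Finset.sum_add_distrib]
  refine Finset.sum_congr rfl fun i _ => ?_
  rw [Finset.mul_sum, ← Finset.sum_add_distrib, ← Finset.sum_add_distrib]
  refine Finset.sum_congr rfl fun j _ => ?_
  simp [Matrix.add_apply]; ring

lemma frobNorm_neg (P : Matrix ι₁ ι₂ ℝ) : frobNorm (-P) = frobNorm P := by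
  unfold frobNorm
  congr 1
  refine Finset.sum_congr rfl fun i _ => Finset.sum_congr rfl fun j _ => by
    simp

lemma frobNorm_sq_sub (P Q : Matrix ι₁ ι₂ ℝ) :
    frobNorm (P - Q) ^ 2 = frobNorm P ^ 2 + frobNorm Q ^ 2 - 2 * minner P Q := by
  have : P - Q = P + (-Q) := sub_eq_add_neg P Q
  rw [this, frobNorm_sq_add, frobNorm_neg, minner_neg_right]
  ring

end FrobMore

section RIPCross

variable {n₁ n₂ m r : ℕ}

lemma calA_add (A : Fin m → Matrix (Fin n₁) (Fin n₂) ℝ) (M N : Matrix (Fin n₁) (Fin n₂) ℝ)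
    (i : Fin m) : calA A (M + N) i = calA A M i + calA A N i := minner_add_right _ _ _

lemma calA_sub (A : Fin m → Matrix (Fin n₁) (Fin n₂) ℝ) (M N : Matrix (Fin n₁) (Fin n₂) ℝ)
    (i : Fin m) : calA A (M - N) i = calA A M i - calA A N i := minner_sub_right _ _ _

lemma calA_smul (A : Fin m → Matrix (Fin n₁) (Fin n₂) ℝ) (c : ℝ) (M : Matrix (Fin n₁) (Fin n₂) ℝ)
    (i : Fin m) : calA A (c • M) i = c * calA A M i := minner_smul_right _ _ _

lemma rip_cross {A : Fin m → Matrix (Fin n₁) (Fin n₂) ℝ} {δ : ℝ}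
    (hδ1 : δ < 1) (hr : 1 ≤ r) (hRIP : HasRIP A (2 * r + 1) δ)
    (X Y : Matrix (Fin n₁) (Fin n₂) ℝ) (hX : X.rank ≤ 1) (hY : Y.rank ≤ 1) :
    |∑ i, calA A X i * calA A Y i| ≤ 2 * (frobNorm X * frobNorm Y) := by
  rcases eq_or_ne (frobNorm X) 0 with hX0 | hX0
  · rw [frobNorm_eq_zero hX0]
    have hz : ∀ i, calA A (0 : Matrix (Fin n₁) (Fin n₂) ℝ) i = 0 := fun i => minner_zero_right _
    simp [hz, frobNorm]
  rcases eq_or_ne (frobNorm Y) 0 with hY0 | hY0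
  · rw [frobNorm_eq_zero hY0]
    have hz : ∀ i, calA A (0 : Matrix (Fin n₁) (Fin n₂) ℝ) i = 0 := fun i => minner_zero_right _
    simp [hz, frobNorm]
  have haX : 0 < frobNorm X := lt_of_le_of_ne (frobNorm_nonneg X) (Ne.symm hX0)
  have haY : 0 < frobNorm Y := lt_of_le_of_ne (frobNorm_nonneg Y) (Ne.symm hY0)
  set a := frobNorm X
  set b := frobNorm Y
  set X' := a⁻¹ • X with hX'def
  set Y' := b⁻¹ • Y with hY'def
  have hfX' : frobNorm X' = 1 := by
    rw [hX'def, frobNorm_smul, abs_of_nonneg (inv_nonneg.mpr haX.le), inv_mul_cancel₀ hX0]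
  have hfY' : frobNorm Y' = 1 := by
    rw [hY'def, frobNorm_smul, abs_of_nonneg (inv_nonneg.mpr haY.le), inv_mul_cancel₀ hY0]
  have hrX' : X'.rank ≤ 1 := le_trans (matrix_rank_smul_le _ _) hX
  have hrY' : Y'.rank ≤ 1 := le_trans (matrix_rank_smul_le _ _) hY
  have hrank_add : (X' + Y').rank ≤ 2 * r + 1 := by
    calc (X' + Y').rank ≤ X'.rank + Y'.rank := matrix_rank_add_le _ _
      _ ≤ 2 := by omega
      _ ≤ 2 * r + 1 := by omega
  have hrank_sub : (X' - Y').rank ≤ 2 * r + 1 := by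
    have : X' - Y' = X' + (-1 : ℝ) • Y' := by
      rw [neg_one_smul]; exact sub_eq_add_neg _ _
    rw [this]
    calc (X' + (-1:ℝ) • Y').rank ≤ X'.rank + ((-1:ℝ) • Y').rank := matrix_rank_add_le _ _
      _ ≤ X'.rank + Y'.rank := by
          have := matrix_rank_smul_le (-1 : ℝ) Y'
          omega
      _ ≤ 2 * r + 1 := by omega
  obtain ⟨hlow_add, hup_add⟩ := hRIP (X' + Y') hrank_add
  obtain ⟨hlow_sub, hup_sub⟩ := hRIP (X' - Y') hrank_sub
  set mXY := minner X' Y' with hm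
  have hmabs : |mXY| ≤ 1 := by
    have := abs_minner_le X' Y'
    rwa [hfX', hfY', mul_one] at this
  have hfadd : frobNorm (X' + Y') ^ 2 = 2 + 2 * mXY := by
    rw [frobNorm_sq_add, hfX', hfY']; ring
  have hfsub : frobNorm (X' - Y') ^ 2 = 2 - 2 * mXY := by
    rw [frobNorm_sq_sub, hfX', hfY']; ring
  have hpolar : ∑ i, calA A X' i * calA A Y' i
      = (∑ i, calA A (X' + Y') i ^ 2 - ∑ i, calA A (X' - Y') i ^ 2) / 4 := by
    rw [← Finset.sum_sub_distrib]
    rw [Finset.sum_div]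
    refine Finset.sum_congr rfl fun i _ => ?_
    rw [calA_add, calA_sub]
    ring
  have hS : |∑ i, calA A X' i * calA A Y' i| ≤ 2 := by
    rw [hpolar]
    rw [abs_le]
    constructor
    · have h1 : (1 - δ) * (2 + 2 * mXY) ≤ ∑ i, calA A (X' + Y') i ^ 2 := by
        rw [← hfadd]; exact hlow_add
      have h2 : ∑ i, calA A (X' - Y') i ^ 2 ≤ (1 + δ) * (2 - 2 * mXY) := by
        rw [← hfsub]; exact hup_sub
      have hm1 : -1 ≤ mXY := by cases abs_le.mp hmabs; linarith
      have hδ0 : -1 ≤ δ := by nlinarith [sq_nonneg (frobNorm (X' + Y')), hfadd, hlow_add]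
      nlinarith
    · have h1 : ∑ i, calA A (X' + Y') i ^ 2 ≤ (1 + δ) * (2 + 2 * mXY) := by
        rw [← hfadd]; exact hup_add
      have h2 : (1 - δ) * (2 - 2 * mXY) ≤ ∑ i, calA A (X' - Y') i ^ 2 := by
        rw [← hfsub]; exact hlow_sub
      have hm1 : mXY ≤ 1 := by cases abs_le.mp hmabs; linarith
      nlinarith
  have hfactor : ∑ i, calA A X i * calA A Y i = a * b * ∑ i, calA A X' i * calA A Y' i := by
    rw [Finset.mul_sum]
    refine Finset.sum_congr rfl fun i _ => ?_
    have e1 : calA A X i = a * calA A X' i := by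
      rw [hX'def, calA_smul]
      field_simp
    have e2 : calA A Y i = b * calA A Y' i := by
      rw [hY'def, calA_smul]
      field_simp
    rw [e1, e2]; ring
  rw [hfactor, abs_mul, abs_of_nonneg (mul_nonneg haX.le haY.le)]
  calc a * b * |∑ i, calA A X' i * calA A Y' i| ≤ a * b * 2 :=
        mul_le_mul_of_nonneg_left hS (mul_nonneg haX.le haY.le)
    _ = 2 * (a * b) := by ring

end RIPCross


section AstarABound

variable {ι₀ ι₁ ι₂ : Type*} [Fintype ι₀] [Fintype ι₁] [Fintype ι₂]

lemma minner_prod_form (N' N : Matrix ι₁ ι₂ ℝ) :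
    minner N' N = ∑ p : ι₁ × ι₂, N' p.1 p.2 * N p.1 p.2 := by
  unfold minner
  rw [← Finset.sum_product']
  rfl

lemma minner_weighted_sum_left (c : ι₀ → ℝ) (A : ι₀ → Matrix ι₁ ι₂ ℝ) (N : Matrix ι₁ ι₂ ℝ) :
    minner (∑ l, c l • A l) N = ∑ l, c l * minner (A l) N := by
  calc minner (∑ l, c l • A l) N
      = ∑ p : ι₁ × ι₂, (∑ l, c l * A l p.1 p.2) * N p.1 p.2 := by
        rw [minner_prod_form]
        refine Finset.sum_congr rfl fun p _ => ?_
        simp [Matrix.sum_apply]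
    _ = ∑ p : ι₁ × ι₂, ∑ l, c l * A l p.1 p.2 * N p.1 p.2 := by
        refine Finset.sum_congr rfl fun p _ => by rw [Finset.sum_mul]
    _ = ∑ l, ∑ p : ι₁ × ι₂, c l * A l p.1 p.2 * N p.1 p.2 := Finset.sum_comm
    _ = ∑ l, c l * minner (A l) N := by
        refine Finset.sum_congr rfl fun l _ => ?_
        rw [minner_prod_form, Finset.mul_sum]
        exact Finset.sum_congr rfl fun p _ => by ring

lemma minner_sum_right {ι₃ : Type*} (s : Finset ι₃) (B : Matrix ι₁ ι₂ ℝ)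
    (M : ι₃ → Matrix ι₁ ι₂ ℝ) :
    minner B (∑ j ∈ s, M j) = ∑ j ∈ s, minner B (M j) := by
  classical
  induction s using Finset.induction with
  | empty => simp [minner_zero_right]
  | insert _ _ h ih =>
      rw [Finset.sum_insert h, Finset.sum_insert h, minner_add_right, ih]

lemma specNorm_sum_le {ι₃ : Type*} (s : Finset ι₃) (M : ι₃ → Matrix ι₁ ι₂ ℝ) :
    specNorm (∑ j ∈ s, M j) ≤ ∑ j ∈ s, specNorm (M j) := by
  classical
  induction s using Finset.induction with
  | empty => simp [specNorm_zero]
  | insert _ _ h ih =>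
      rw [Finset.sum_insert h, Finset.sum_insert h]
      exact (specNorm_add_le _ _).trans (by linarith)

end AstarABound

section AstarASpec

variable {n₁ n₂ m r k : ℕ}

lemma AstarA_sum {ι₃ : Type*} [Fintype ι₃] (A : Fin m → Matrix (Fin n₁) (Fin n₂) ℝ)
    (s : Finset ι₃) (M : ι₃ → Matrix (Fin n₁) (Fin n₂) ℝ) :
    AstarA A (∑ j ∈ s, M j) = ∑ j ∈ s, AstarA A (M j) := by
  unfold AstarA
  rw [Finset.sum_comm]
  refine Finset.sum_congr rfl fun l _ => ?_
  rw [minner_sum_right, Finset.sum_smul]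

lemma specNorm_AstarA_rank1 {A : Fin m → Matrix (Fin n₁) (Fin n₂) ℝ} {δ : ℝ}
    (hδ1 : δ < 1) (hr : 1 ≤ r) (hRIP : HasRIP A (2 * r + 1) δ)
    (u : Fin n₁ → ℝ) (v : Fin n₂ → ℝ) :
    specNorm (AstarA A (Matrix.vecMulVec u v)) ≤ 2 * (euclNorm u * euclNorm v) := by
  have hrhs : 0 ≤ 2 * (euclNorm u * euclNorm v) := by
    have := mul_nonneg (euclNorm_nonneg u) (euclNorm_nonneg v); linarith
  refine specNorm_le _ hrhs fun x hx => ?_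
  set M := Matrix.vecMulVec u v with hM
  set s := (AstarA A M).mulVec x with hs
  set t := euclNorm s with ht
  rcases eq_or_ne t 0 with h0 | h0
  · rw [← ht] at *; rw [h0]; exact hrhs
  have htpos : 0 < t := lt_of_le_of_ne (euclNorm_nonneg _) (Ne.symm h0)
  set y := t⁻¹ • s with hy
  have hyn : euclNorm y = 1 := by
    rw [hy, euclNorm_smul, abs_of_nonneg (inv_nonneg.mpr htpos.le), ← ht, inv_mul_cancel₀ h0]
  have hts : t = y ⬝ᵥ s := by
    rw [hy, smul_dotProduct, dotProduct_self_eq_sq, ← ht, smul_eq_mul]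
    field_simp
  have hkey : y ⬝ᵥ s = ∑ l, calA A M l * calA A (Matrix.vecMulVec y x) l := by
    rw [hs, ← minner_vecMulVec]
    have : AstarA A M = ∑ l, calA A M l • A l := rfl
    rw [this, minner_weighted_sum_left]
    rfl
  have hcross := rip_cross hδ1 hr hRIP M (Matrix.vecMulVec y x)
    (matrix_rank_vecMulVec_le_one u v) (matrix_rank_vecMulVec_le_one y x)
  rw [frobNorm_vecMulVec, frobNorm_vecMulVec, hyn, one_mul] at hcross
  have : t ≤ 2 * (euclNorm u * euclNorm v * euclNorm x) := by
    rw [hts, hkey]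
    exact (le_abs_self _).trans hcross
  calc t ≤ 2 * (euclNorm u * euclNorm v * euclNorm x) := this
    _ ≤ 2 * (euclNorm u * euclNorm v * 1) := by
        have h2 : 0 ≤ euclNorm u * euclNorm v := mul_nonneg (euclNorm_nonneg u) (euclNorm_nonneg v)
        have := mul_le_mul_of_nonneg_left hx h2
        linarith
    _ = 2 * (euclNorm u * euclNorm v) := by ring

lemma mul_transpose_eq_sum_cols (V : Matrix (Fin n₁) (Fin k) ℝ) (W : Matrix (Fin n₂) (Fin k) ℝ) :
    V * Wᵀ = ∑ j : Fin k, Matrix.vecMulVec (fun i => V i j) (fun i' => W i' j) := by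
  ext i i'
  simp [Matrix.mul_apply, Matrix.sum_apply, Matrix.vecMulVec_apply]

lemma eq_sum_rows (M : Matrix (Fin n₁) (Fin n₂) ℝ) :
    M = ∑ i : Fin n₁, Matrix.vecMulVec (Pi.single i (1:ℝ)) (fun j => M i j) := by
  ext i' j
  rw [Matrix.sum_apply]
  rw [Finset.sum_eq_single i']
  · simp [Matrix.vecMulVec_apply]
  · intro b _ hb
    simp [Matrix.vecMulVec_apply, Pi.single_eq_of_ne' hb]
  · intro h; exact absurd (Finset.mem_univ i') h

lemma specNorm_AstarA_mul_le {A : Fin m → Matrix (Fin n₁) (Fin n₂) ℝ} {δ : ℝ}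
    (hδ1 : δ < 1) (hr : 1 ≤ r) (hRIP : HasRIP A (2 * r + 1) δ)
    (V : Matrix (Fin n₁) (Fin k) ℝ) (W : Matrix (Fin n₂) (Fin k) ℝ) :
    specNorm (AstarA A (V * Wᵀ))
      ≤ 2 * ((min k (n₁ + n₂) : ℕ) : ℝ) * (specNorm V * specNorm W) := by
  have hVW : 0 ≤ specNorm V * specNorm W := mul_nonneg (specNorm_nonneg V) (specNorm_nonneg W)
  rcases le_or_gt k (n₁ + n₂) with hk | hk
  · -- column decomposition
    rw [mul_transpose_eq_sum_cols, AstarA_sum]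
    calc specNorm (∑ j : Fin k, AstarA A (Matrix.vecMulVec (fun i => V i j) fun i' => W i' j))
        ≤ ∑ j : Fin k, specNorm (AstarA A (Matrix.vecMulVec (fun i => V i j) fun i' => W i' j)) :=
          specNorm_sum_le _ _
      _ ≤ ∑ j : Fin k, 2 * (specNorm V * specNorm W) := by
          refine Finset.sum_le_sum fun j _ => ?_
          refine (specNorm_AstarA_rank1 hδ1 hr hRIP _ _).trans ?_
          have h1 := euclNorm_col_le_specNorm V j
          have h2 := euclNorm_col_le_specNorm W j
          have := mul_le_mul h1 h2 (euclNorm_nonneg _) (specNorm_nonneg V)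
          linarith
      _ = (k : ℝ) * (2 * (specNorm V * specNorm W)) := by
          rw [Finset.sum_const, Finset.card_univ, Fintype.card_fin, nsmul_eq_mul]
      _ ≤ 2 * ((min k (n₁ + n₂) : ℕ) : ℝ) * (specNorm V * specNorm W) := by
          have : (min k (n₁ + n₂) : ℕ) = k := min_eq_left hk
          rw [this]; ring_nf; exact le_rfl
  · -- row decomposition
    have hM : specNorm (V * Wᵀ) ≤ specNorm V * specNorm W := by
      refine (specNorm_mul_le V Wᵀ).trans ?_
      rw [specNorm_transpose]
    set M := V * Wᵀ with hMdef
    conv_lhs => rw [eq_sum_rows M]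
    rw [AstarA_sum]
    calc specNorm (∑ i : Fin n₁, AstarA A (Matrix.vecMulVec (Pi.single i (1:ℝ)) fun j => M i j))
        ≤ ∑ i : Fin n₁, specNorm (AstarA A (Matrix.vecMulVec (Pi.single i (1:ℝ)) fun j => M i j)) :=
          specNorm_sum_le _ _
      _ ≤ ∑ i : Fin n₁, 2 * (specNorm V * specNorm W) := by
          refine Finset.sum_le_sum fun i _ => ?_
          refine (specNorm_AstarA_rank1 hδ1 hr hRIP _ _).trans ?_
          rw [euclNorm_single, one_mul]
          have hrow : euclNorm (fun j => M i j) ≤ specNorm M := by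
            have : (fun j => M i j) = fun j => Mᵀ j i := rfl
            rw [this]
            refine (euclNorm_col_le_specNorm Mᵀ i).trans ?_
            rw [specNorm_transpose]
          have := hrow.trans hM
          linarith
      _ = (n₁ : ℝ) * (2 * (specNorm V * specNorm W)) := by
          rw [Finset.sum_const, Finset.card_univ, Fintype.card_fin, nsmul_eq_mul]
      _ ≤ 2 * ((min k (n₁ + n₂) : ℕ) : ℝ) * (specNorm V * specNorm W) := by
          have hmin : (min k (n₁ + n₂) : ℕ) = n₁ + n₂ := min_eq_right hk.le
          rw [hmin]
          have hn : (n₁ : ℝ) ≤ ((n₁ + n₂ : ℕ) : ℝ) := by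
            push_cast; linarith [Nat.cast_nonneg (α := ℝ) n₂]
          nlinarith
end AstarASpec


section SymAlgebra

variable {n₁ n₂ m k : ℕ}

lemma minner_smul_left {ι₁ ι₂ : Type*} [Fintype ι₁] [Fintype ι₂] (c : ℝ)
    (M N : Matrix ι₁ ι₂ ℝ) : minner (c • M) N = c * minner M N := by
  unfold minner
  rw [Finset.mul_sum]
  refine Finset.sum_congr rfl fun i _ => ?_
  rw [Finset.mul_sum]
  refine Finset.sum_congr rfl fun j _ => ?_
  simp [Matrix.smul_apply]; ring

lemma minner_transpose {ι₁ ι₂ : Type*} [Fintype ι₁] [Fintype ι₂]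
    (M N : Matrix ι₁ ι₂ ℝ) : minner Mᵀ Nᵀ = minner M N := by
  unfold minner
  rw [Finset.sum_comm]
  rfl

lemma symMat_apply_sum {Y : Matrix (Fin n₁) (Fin n₂) ℝ} : True := trivial

lemma symMat_smul (c : ℝ) (C : Matrix (Fin n₁) (Fin n₂) ℝ) :
    symMat (c • C) = c • symMat C := by
  ext i j
  rcases i with i | i <;> rcases j with j | j <;> simp [symMat]

lemma symMat_sub (C D : Matrix (Fin n₁) (Fin n₂) ℝ) :
    symMat (C - D) = symMat C - symMat D := by
  ext i j
  rcases i with i | i <;> rcases j with j | j <;> simp [symMat]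

lemma symMat_sum {ι : Type*} (s : Finset ι) (C : ι → Matrix (Fin n₁) (Fin n₂) ℝ) :
    symMat (∑ l ∈ s, C l) = ∑ l ∈ s, symMat (C l) := by
  ext i j
  rcases i with i | i <;> rcases j with j | j <;>
    simp [symMat, Matrix.sum_apply, Matrix.transpose_apply]

lemma minner_symMat_symMat (P Y : Matrix (Fin n₁) (Fin n₂) ℝ) :
    minner (symMat P) (symMat Y) = 2 * minner P Y := by
  unfold minner symMat
  rw [Fintype.sum_sum_type]
  have h1 : ∀ i : Fin n₁, ∑ j : Fin n₁ ⊕ Fin n₂,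
      (Matrix.fromBlocks 0 P Pᵀ 0) (Sum.inl i) j * (Matrix.fromBlocks 0 Y Yᵀ 0) (Sum.inl i) j
      = ∑ j : Fin n₂, P i j * Y i j := by
    intro i
    rw [Fintype.sum_sum_type]
    simp
  have h2 : ∀ i : Fin n₂, ∑ j : Fin n₁ ⊕ Fin n₂,
      (Matrix.fromBlocks 0 P Pᵀ 0) (Sum.inr i) j * (Matrix.fromBlocks 0 Y Yᵀ 0) (Sum.inr i) j
      = ∑ j : Fin n₁, P j i * Y j i := by
    intro i
    rw [Fintype.sum_sum_type]
    simp [Matrix.transpose_apply]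
  rw [Finset.sum_congr rfl fun i _ => h1 i, Finset.sum_congr rfl fun i _ => h2 i]
  rw [Finset.sum_comm (s := Finset.univ) (t := Finset.univ) (f := fun i j => P j i * Y j i)]
  ring

lemma Bmat_eq (A : Fin m → Matrix (Fin n₁) (Fin n₂) ℝ) (i : Fin m) :
    Bmat A i = (Real.sqrt 2)⁻¹ • symMat (A i) := rfl

lemma sqrt2_ne : (Real.sqrt 2) ≠ 0 := by positivity

lemma BstarB_symMat (A : Fin m → Matrix (Fin n₁) (Fin n₂) ℝ) (Y : Matrix (Fin n₁) (Fin n₂) ℝ) :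
    BstarB A (symMat Y) = symMat (AstarA A Y) := by
  unfold BstarB
  have hterm : ∀ i, minner (Bmat A i) (symMat Y) • Bmat A i
      = minner (A i) Y • symMat (A i) := by
    intro i
    rw [Bmat_eq, minner_smul_left, minner_symMat_symMat, smul_smul]
    congr 1
    rw [mul_comm ((Real.sqrt 2)⁻¹ * (2 * minner (A i) Y)) ((Real.sqrt 2)⁻¹)]
    rw [← mul_assoc]
    have : (Real.sqrt 2)⁻¹ * (Real.sqrt 2)⁻¹ * 2 = 1 := by
      rw [← mul_inv]
      rw [Real.mul_self_sqrt (by norm_num : (0:ℝ) ≤ 2)]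
      norm_num
    rw [mul_assoc ((Real.sqrt 2)⁻¹) ((Real.sqrt 2)⁻¹) (2 * minner (A i) Y), ← mul_assoc ((Real.sqrt 2)⁻¹) 2 (minner (A i) Y)] 
    rw [show (Real.sqrt 2)⁻¹ * ((Real.sqrt 2)⁻¹ * 2 * minner (A i) Y) = ((Real.sqrt 2)⁻¹ * (Real.sqrt 2)⁻¹ * 2) * minner (A i) Y by ring, this, one_mul]
  rw [Finset.sum_congr rfl fun i _ => hterm i]
  unfold AstarA
  rw [symMat_sum]
  refine Finset.sum_congr rfl fun i _ => ?_
  rw [symMat_smul]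

lemma Zstack_sub_smul (V P : Matrix (Fin n₁) (Fin k) ℝ) (W Q : Matrix (Fin n₂) (Fin k) ℝ)
    (μ : ℝ) : Zstack (V - μ • P) (W - μ • Q) = Zstack V W - μ • Zstack P Q := by
  ext i j
  rcases i with i | i <;> simp [Zstack, Matrix.smul_apply, Matrix.fromRows_apply_inl, Matrix.fromRows_apply_inr] <;> ring

lemma symMat_mul_Zstack (C : Matrix (Fin n₁) (Fin n₂) ℝ) (V : Matrix (Fin n₁) (Fin k) ℝ)
    (W : Matrix (Fin n₂) (Fin k) ℝ) :
    symMat C * Zstack V W = Zstack (C * W) (Cᵀ * V) := by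
  ext i j
  rcases i with i | i
  · rw [Matrix.mul_apply, Fintype.sum_sum_type]
    simp only [symMat, Matrix.fromBlocks_apply₁₁, Matrix.fromBlocks_apply₁₂,
      Matrix.zero_apply, zero_mul, Finset.sum_const_zero, zero_add]
    simp only [Zstack, Matrix.smul_apply, Matrix.fromRows_apply_inl, Matrix.fromRows_apply_inr,
      smul_eq_mul, Matrix.mul_apply]
    rw [Finset.mul_sum]
    refine Finset.sum_congr rfl fun l _ => by ring
  · rw [Matrix.mul_apply, Fintype.sum_sum_type]
    simp only [symMat, Matrix.fromBlocks_apply₂₁, Matrix.fromBlocks_apply₂₂,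
      Matrix.zero_apply, zero_mul, Finset.sum_const_zero, add_zero]
    simp only [Zstack, Matrix.smul_apply, Matrix.fromRows_apply_inl, Matrix.fromRows_apply_inr,
      smul_eq_mul, Matrix.mul_apply]
    rw [Finset.mul_sum]
    refine Finset.sum_congr rfl fun l _ => by ring

lemma AstarA_sub (A : Fin m → Matrix (Fin n₁) (Fin n₂) ℝ) (M N : Matrix (Fin n₁) (Fin n₂) ℝ) :
    AstarA A (M - N) = AstarA A M - AstarA A N := by
  unfold AstarA
  rw [← Finset.sum_sub_distrib]
  refine Finset.sum_congr rfl fun i _ => ?_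
  rw [minner_sub_right, sub_smul]

lemma Zit_succ (A : Fin m → Matrix (Fin n₁) (Fin n₂) ℝ) (X : Matrix (Fin n₁) (Fin n₂) ℝ)
    (μ : ℝ) (V₀ : Matrix (Fin n₁) (Fin k) ℝ) (W₀ : Matrix (Fin n₂) (Fin k) ℝ) (t : ℕ) :
    Zit A X μ V₀ W₀ (t + 1)
      = Zit A X μ V₀ W₀ t + μ • (symMat (AstarA A X) * Zit A X μ V₀ W₀ t)
        - μ • (symMat (AstarA A ((iter A X μ V₀ W₀ t).1 * (iter A X μ V₀ W₀ t).2ᵀ))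
            * Zit A X μ V₀ W₀ t) := by
  set V := (iter A X μ V₀ W₀ t).1 with hV
  set W := (iter A X μ V₀ W₀ t).2 with hW
  set G := AstarA A (V * Wᵀ - X) with hG
  have hit : iter A X μ V₀ W₀ (t + 1) = (V - μ • (G * W), W - μ • (Gᵀ * V)) := rfl
  have h1 : Zit A X μ V₀ W₀ (t + 1) = Zstack (V - μ • (G * W)) (W - μ • (Gᵀ * V)) := by
    unfold Zit
    rw [hit]
  rw [h1, Zstack_sub_smul, ← symMat_mul_Zstack]
  have hZt : Zit A X μ V₀ W₀ t = Zstack V W := rfl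
  rw [← hZt, hG, AstarA_sub, symMat_sub, Matrix.sub_mul, smul_sub]
  abel

end SymAlgebra


section FinalHelpers

variable {n₁ n₂ m k : ℕ}

lemma specNorm_neg {ι₁ ι₂ : Type*} [Fintype ι₁] [Fintype ι₂] (M : Matrix ι₁ ι₂ ℝ) :
    specNorm (-M) = specNorm M := by
  have h : ∀ P : Matrix ι₁ ι₂ ℝ, specNorm (-P) ≤ specNorm P := by
    intro P
    have := specNorm_smul_le (-1 : ℝ) P
    simpa using this
  refine le_antisymm (h M) ?_
  have := h (-M)
  simpa using this

lemma specNorm_sub_le {ι₁ ι₂ : Type*} [Fintype ι₁] [Fintype ι₂] (P Q : Matrix ι₁ ι₂ ℝ) :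
    specNorm (P - Q) ≤ specNorm P + specNorm Q := by
  rw [sub_eq_add_neg]
  refine (specNorm_add_le P (-Q)).trans ?_
  rw [specNorm_neg]

lemma specNorm_pow_le {ι : Type*} [Fintype ι] [DecidableEq ι] (M : Matrix ι ι ℝ) {s : ℝ}
    (hM : specNorm M ≤ s) (hs : 0 ≤ s) (n : ℕ) : specNorm (M ^ n) ≤ s ^ n := by
  induction n with
  | zero => simpa using specNorm_one_le
  | succ n ih =>
      rw [pow_succ, pow_succ]
      exact (specNorm_mul_le _ _).trans
        (mul_le_mul ih hM (specNorm_nonneg _) (pow_nonneg hs n))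

lemma AstarA_zero (A : Fin m → Matrix (Fin n₁) (Fin n₂) ℝ) : AstarA A 0 = 0 := by
  unfold AstarA
  simp [minner_zero_right]

lemma symMat_zero : symMat (0 : Matrix (Fin n₁) (Fin n₂) ℝ) = 0 := by
  ext i j
  rcases i with i | i <;> rcases j with j | j <;> simp [symMat]

lemma specNorm_of_isEmpty {ι κ : Type*} [Fintype ι] [Fintype κ] [IsEmpty κ]
    (M : Matrix ι κ ℝ) : specNorm M = 0 := by
  refine le_antisymm (specNorm_le _ le_rfl fun x _ => ?_) (specNorm_nonneg _)
  have : M.mulVec x = 0 := by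
    funext i
    simp [Matrix.mulVec, dotProduct]
  rw [this, euclNorm_zero]

lemma Zstack_zero : Zstack (0 : Matrix (Fin n₁) (Fin k) ℝ) (0 : Matrix (Fin n₂) (Fin k) ℝ) = 0 := by
  ext i j
  rcases i with i | i <;> simp [Zstack]

lemma Zstack_eq_zero {V : Matrix (Fin n₁) (Fin k) ℝ} {W : Matrix (Fin n₂) (Fin k) ℝ}
    (h : Zstack V W = 0) : V = 0 ∧ W = 0 := by
  have hs : (Real.sqrt 2)⁻¹ ≠ 0 := inv_ne_zero sqrt2_ne
  constructor
  · ext i j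
    have := congrFun (congrFun h (Sum.inl i)) j
    simp only [Zstack, Matrix.smul_apply, Matrix.fromRows_apply_inl, smul_eq_mul,
      Matrix.zero_apply] at this
    simpa using (mul_eq_zero.mp this).resolve_left hs
  · ext i j
    have := congrFun (congrFun h (Sum.inr i)) j
    simp only [Zstack, Matrix.smul_apply, Matrix.fromRows_apply_inr, smul_eq_mul,
      Matrix.zero_apply] at this
    simpa using (mul_eq_zero.mp this).resolve_left hs

lemma iter_zero_zero (A : Fin m → Matrix (Fin n₁) (Fin n₂) ℝ) (X : Matrix (Fin n₁) (Fin n₂) ℝ)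
    (μ : ℝ) (t : ℕ) :
    iter A X μ (0 : Matrix (Fin n₁) (Fin k) ℝ) (0 : Matrix (Fin n₂) (Fin k) ℝ) t = (0, 0) := by
  induction t with
  | zero => rfl
  | succ t ih =>
      show (let p := iter A X μ 0 0 t
        let G := AstarA A (p.1 * p.2ᵀ - X)
        (p.1 - μ • (G * p.2), p.2 - μ • (Gᵀ * p.1))) = (0, 0)
      rw [ih]
      simp

lemma fromRows_eq_sqrt2_smul (V : Matrix (Fin n₁) (Fin k) ℝ) (W : Matrix (Fin n₂) (Fin k) ℝ) :
    Matrix.fromRows V W = Real.sqrt 2 • Zstack V W := by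
  unfold Zstack
  rw [smul_smul, mul_inv_cancel₀ sqrt2_ne, one_smul]

lemma specNorm_left_le_Zstack (V : Matrix (Fin n₁) (Fin k) ℝ) (W : Matrix (Fin n₂) (Fin k) ℝ) :
    specNorm V ≤ Real.sqrt 2 * specNorm (Zstack V W) := by
  refine (specNorm_fromRows_left V W).trans ?_
  rw [fromRows_eq_sqrt2_smul]
  refine (specNorm_smul_le _ _).trans ?_
  rw [abs_of_nonneg (Real.sqrt_nonneg 2)]

lemma specNorm_right_le_Zstack (V : Matrix (Fin n₁) (Fin k) ℝ) (W : Matrix (Fin n₂) (Fin k) ℝ) :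
    specNorm W ≤ Real.sqrt 2 * specNorm (Zstack V W) := by
  refine (specNorm_fromRows_right V W).trans ?_
  rw [fromRows_eq_sqrt2_smul]
  refine (specNorm_smul_le _ _).trans ?_
  rw [abs_of_nonneg (Real.sqrt_nonneg 2)]

lemma specNorm_VW_le (V : Matrix (Fin n₁) (Fin k) ℝ) (W : Matrix (Fin n₂) (Fin k) ℝ) :
    specNorm V * specNorm W ≤ 2 * specNorm (Zstack V W) ^ 2 := by
  have h1 := specNorm_left_le_Zstack V W
  have h2 := specNorm_right_le_Zstack V W
  have hz := specNorm_nonneg (Zstack V W)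
  have hsq : Real.sqrt 2 * Real.sqrt 2 = 2 := Real.mul_self_sqrt (by norm_num)
  have := mul_le_mul h1 h2 (specNorm_nonneg W) (by positivity)
  calc specNorm V * specNorm W ≤ Real.sqrt 2 * specNorm (Zstack V W)
        * (Real.sqrt 2 * specNorm (Zstack V W)) := this
    _ = (Real.sqrt 2 * Real.sqrt 2) * specNorm (Zstack V W) ^ 2 := by ring
    _ = 2 * specNorm (Zstack V W) ^ 2 := by rw [hsq]

end FinalHelpers


set_option maxHeartbeats 1200000 in
/-- closeness of the gradient descent iterates to the power method iterates. -/
theorem statement4_power_method_error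
    {n₁ n₂ m k r : ℕ}
    (A : Fin m → Matrix (Fin n₁) (Fin n₂) ℝ) (X : Matrix (Fin n₁) (Fin n₂) ℝ)
    (hrankX : X.rank = r)
    (μ : ℝ) (hμ : 0 < μ)
    (V₀ : Matrix (Fin n₁) (Fin k) ℝ) (W₀ : Matrix (Fin n₂) (Fin k) ℝ)
    (Z : ℕ → Matrix (Fin n₁ ⊕ Fin n₂) (Fin k) ℝ) (hZ : Z = Zit A X μ V₀ W₀)
    (F : Matrix (Fin n₁ ⊕ Fin n₂) (Fin n₁ ⊕ Fin n₂) ℝ) (hF : F = BstarB A (symMat X))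
    (δ : ℝ) (hδ0 : 0 < δ) (hδ1 : δ < 1) (hRIP : HasRIP A (2 * r + 1) δ)
    (hZ0 : specNorm (Z 0) ^ 2 ≤ specNorm F / 16) :
    ∀ t : ℕ,
      (t : ℝ) ≤ Real.log (specNorm F / (16 * ((min k (n₁ + n₂) : ℕ) : ℝ) * specNorm (Z 0) ^ 2))
          / (3 * Real.log (1 + μ * specNorm F)) →
      specNorm (Z t - (1 + μ • F) ^ t * Z 0)
          ≤ 16 / specNorm F * ((min k (n₁ + n₂) : ℕ) : ℝ) * (1 + μ * specNorm F) ^ (3 * t)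
            * specNorm (Z 0) ^ 3 ∧
      16 / specNorm F * ((min k (n₁ + n₂) : ℕ) : ℝ) * (1 + μ * specNorm F) ^ (3 * t)
          * specNorm (Z 0) ^ 3 ≤ specNorm (Z 0) := by
  subst hZ
  have hFeq : F = symMat (AstarA A X) := by rw [hF, BstarB_symMat]
  intro t htle
  rcases eq_or_lt_of_le (specNorm_nonneg F) with hf0 | hfpos
  · -- degenerate : specNorm F = 0
    have hf0' : specNorm F = 0 := hf0.symm
    have ht0 : t = 0 := by
      rw [hf0'] at htle
      simp only [zero_div, mul_zero, add_zero, Real.log_one, mul_zero, div_zero,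
        Real.log_zero, zero_mul] at htle
      exact_mod_cast le_antisymm (by exact_mod_cast htle) (Nat.zero_le t)
    subst ht0
    constructor
    · rw [pow_zero, Matrix.one_mul, sub_self, specNorm_zero, hf0']
      simp
    · rw [hf0']
      simp only [div_zero, zero_mul]
      exact specNorm_nonneg _
  rcases eq_or_lt_of_le (specNorm_nonneg (Zit A X μ V₀ W₀ 0)) with ha0 | hapos
  · -- degenerate : specNorm (Z 0) = 0
    have hZ00 : Zit A X μ V₀ W₀ 0 = 0 := specNorm_eq_zero ha0.symm
    have hVW : V₀ = 0 ∧ W₀ = 0 := Zstack_eq_zero hZ00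
    obtain ⟨hV₀, hW₀⟩ := hVW
    subst hV₀; subst hW₀
    have hZt : ∀ u : ℕ, Zit A X μ (0 : Matrix (Fin n₁) (Fin k) ℝ)
        (0 : Matrix (Fin n₂) (Fin k) ℝ) u = 0 := by
      intro u
      unfold Zit
      rw [iter_zero_zero]
      exact Zstack_zero
    constructor
    · rw [hZt t, hZt 0, Matrix.mul_zero, sub_self, specNorm_zero]
      simp [specNorm_zero]
    · rw [hZt 0, specNorm_zero]
      simp
  -- main case
  have hX0 : X ≠ 0 := by
    intro hx
    rw [hx, AstarA_zero, symMat_zero] at hFeq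
    rw [hFeq, specNorm_zero] at hfpos
    exact lt_irrefl _ hfpos
  have hr1 : 1 ≤ r := by
    rw [← hrankX]
    exact matrix_rank_pos_of_ne_zero hX0
  have hk1 : 1 ≤ k := by
    rcases Nat.eq_zero_or_pos k with hk | hk
    · subst hk
      rw [specNorm_of_isEmpty] at hapos
      exact absurd hapos (lt_irrefl 0)
    · exact hk
  have hn1 : 1 ≤ n₁ := by
    rcases Nat.eq_zero_or_pos n₁ with hn | hn
    · subst hn
      exact absurd (by ext i j; exact i.elim0 : X = 0) hX0
    · exact hn
  have hNnat : 1 ≤ min k (n₁ + n₂) := le_min hk1 (by omega)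
  set N : ℝ := ((min k (n₁ + n₂) : ℕ) : ℝ) with hNdef
  have hN1 : (1:ℝ) ≤ N := by rw [hNdef]; exact_mod_cast hNnat
  set f := specNorm F with hfdef
  set a := specNorm (Zit A X μ V₀ W₀ 0) with hadef
  set β := 1 + μ * f with hβdef
  clear_value β
  have hμf : 0 < μ * f := mul_pos hμ hfpos
  have hβ1 : 1 < β := by rw [hβdef]; linarith
  have hβ0 : 0 < β := lt_trans one_pos hβ1
  have hlogβ : 0 < Real.log β := Real.log_pos hβ1
  have hfne : f ≠ 0 := ne_of_gt hfpos
  have hNne : N ≠ 0 := by linarith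
  have hane : a ≠ 0 := ne_of_gt hapos
  have part2 : ∀ s : ℕ, (s:ℝ) ≤ Real.log (f / (16 * N * a ^ 2)) / (3 * Real.log β) →
      16 / f * N * β ^ (3 * s) * a ^ 3 ≤ a := by
    intro s hs
    have h16Na : (0:ℝ) < 16 * N * a ^ 2 := by
      have h1 : (0:ℝ) < 16 * N := by linarith
      have h2 : (0:ℝ) < a ^ 2 := pow_pos hapos 2
      exact mul_pos h1 h2
    have harg : 0 < f / (16 * N * a ^ 2) := div_pos hfpos h16Na
    have hpow : β ^ (3 * s) ≤ f / (16 * N * a ^ 2) := by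
      have h3 : 0 < 3 * Real.log β := by linarith
      have hmul := (le_div_iff₀ h3).mp hs
      have hlog : Real.log (β ^ (3 * s)) ≤ Real.log (f / (16 * N * a ^ 2)) := by
        rw [Real.log_pow]
        push_cast
        linarith
      exact (Real.log_le_log_iff (pow_pos hβ0 _) harg).mp hlog
    have h0 : (0:ℝ) ≤ 16 / f * N := by
      have : (0:ℝ) ≤ 16 / f := div_nonneg (by norm_num) hfpos.le
      nlinarith
    calc 16 / f * N * β ^ (3 * s) * a ^ 3
        ≤ 16 / f * N * (f / (16 * N * a ^ 2)) * a ^ 3 :=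
          mul_le_mul_of_nonneg_right (mul_le_mul_of_nonneg_left hpow h0)
            (pow_nonneg hapos.le 3)
      _ = a := by field_simp
  have main : ∀ s : ℕ, (s:ℝ) ≤ Real.log (f / (16 * N * a ^ 2)) / (3 * Real.log β) →
      specNorm (Zit A X μ V₀ W₀ s - (1 + μ • F) ^ s * Zit A X μ V₀ W₀ 0)
        ≤ 16 / f * N * β ^ (3 * s) * a ^ 3 := by
    intro s
    induction s with
    | zero =>
        intro _
        rw [pow_zero, Matrix.one_mul, sub_self, specNorm_zero]
        have h1 : (0:ℝ) ≤ 16 / f := div_nonneg (by norm_num) hfpos.le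
        have h2 : (0:ℝ) ≤ β ^ (3 * 0) := pow_nonneg hβ0.le _
        have h3 : (0:ℝ) ≤ a ^ 3 := pow_nonneg hapos.le 3
        have h4 : (0:ℝ) ≤ 16 / f * N := by nlinarith
        have h5 : (0:ℝ) ≤ 16 / f * N * β ^ (3 * 0) := by nlinarith
        nlinarith
    | succ s ih =>
        intro hle
        have hle' : (s:ℝ) ≤ Real.log (f / (16 * N * a ^ 2)) / (3 * Real.log β) := by
          have : (s:ℝ) ≤ ((s+1 : ℕ):ℝ) := by push_cast; linarith
          linarith [this, hle]
        have hEt := ih hle'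
        have hbt := part2 s hle'
        have hstep : Zit A X μ V₀ W₀ (s + 1)
            = Zit A X μ V₀ W₀ s + μ • (F * Zit A X μ V₀ W₀ s)
              - μ • (symMat (AstarA A ((iter A X μ V₀ W₀ s).1 * (iter A X μ V₀ W₀ s).2ᵀ))
                  * Zit A X μ V₀ W₀ s) := by
          rw [Zit_succ, ← hFeq]
        set Φ := symMat (AstarA A ((iter A X μ V₀ W₀ s).1 * (iter A X μ V₀ W₀ s).2ᵀ)) with hΦ
        set Zt := Zit A X μ V₀ W₀ s with hZts
        set Z0M := Zit A X μ V₀ W₀ 0 with hZ0Ms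
        have hErec : Zit A X μ V₀ W₀ (s + 1) - (1 + μ • F) ^ (s + 1) * Z0M
            = (1 + μ • F) * (Zt - (1 + μ • F) ^ s * Z0M) - μ • (Φ * Zt) := by
          rw [hstep, pow_succ']
          simp only [Matrix.mul_sub, Matrix.add_mul, Matrix.one_mul, Matrix.smul_mul,
            Matrix.mul_assoc]
          abel
        rw [hErec]
        have hβnorm : specNorm (1 + μ • F) ≤ β := by
          refine (specNorm_add_le _ _).trans ?_
          have h1 := specNorm_one_le (ι := Fin n₁ ⊕ Fin n₂)
          have h2 : specNorm (μ • F) ≤ μ * f := by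
            refine (specNorm_smul_le μ F).trans ?_
            rw [abs_of_nonneg hμ.le]
          rw [hβdef]
          linarith
        have hpownorm : specNorm ((1 + μ • F) ^ s) ≤ β ^ s :=
          specNorm_pow_le _ hβnorm hβ0.le s
        have hβs1 : (1:ℝ) ≤ β ^ s := one_le_pow₀ hβ1.le
        have hZtb : specNorm Zt ≤ 2 * β ^ s * a := by
          have h0 : Zt = (Zt - (1 + μ • F) ^ s * Z0M) + (1 + μ • F) ^ s * Z0M := by abel
          calc specNorm Zt
              ≤ specNorm (Zt - (1 + μ • F) ^ s * Z0M) + specNorm ((1 + μ • F) ^ s * Z0M) := by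
                conv_lhs => rw [h0]
                exact specNorm_add_le _ _
            _ ≤ 16 / f * N * β ^ (3 * s) * a ^ 3 + β ^ s * a := by
                refine add_le_add hEt ?_
                refine (specNorm_mul_le _ _).trans ?_
                exact mul_le_mul hpownorm le_rfl (specNorm_nonneg _) (pow_nonneg hβ0.le s)
            _ ≤ a + β ^ s * a := by linarith
            _ ≤ 2 * β ^ s * a := by nlinarith
        have hΦb : specNorm Φ ≤ 4 * N * specNorm Zt ^ 2 := by
          rw [hΦ]
          refine (specNorm_symMat_le _).trans ?_
          refine (specNorm_AstarA_mul_le hδ1 hr1 hRIP _ _).trans ?_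
          have hvw := specNorm_VW_le (iter A X μ V₀ W₀ s).1 (iter A X μ V₀ W₀ s).2
          have hzz : Zstack (iter A X μ V₀ W₀ s).1 (iter A X μ V₀ W₀ s).2 = Zt := rfl
          rw [hzz] at hvw
          nlinarith [specNorm_nonneg Zt, specNorm_nonneg (iter A X μ V₀ W₀ s).1,
            specNorm_nonneg (iter A X μ V₀ W₀ s).2]
        have hz3 : specNorm Zt ^ 3 ≤ 8 * β ^ (3 * s) * a ^ 3 := by
          have := pow_le_pow_left₀ (specNorm_nonneg Zt) hZtb 3
          calc specNorm Zt ^ 3 ≤ (2 * β ^ s * a) ^ 3 := this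
            _ = 8 * (β ^ s) ^ 3 * a ^ 3 := by ring
            _ = 8 * β ^ (3 * s) * a ^ 3 := by rw [← pow_mul, mul_comm s 3]
        have hnorm1 : specNorm ((1 + μ • F) * (Zt - (1 + μ • F) ^ s * Z0M))
            ≤ β * (16 / f * N * β ^ (3 * s) * a ^ 3) := by
          refine (specNorm_mul_le _ _).trans ?_
          exact mul_le_mul hβnorm hEt (specNorm_nonneg _) hβ0.le
        have hnorm2 : specNorm (μ • (Φ * Zt)) ≤ μ * (4 * N * specNorm Zt ^ 2 * specNorm Zt) := by
          refine (specNorm_smul_le μ _).trans ?_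
          rw [abs_of_nonneg hμ.le]
          refine mul_le_mul_of_nonneg_left ?_ hμ.le
          refine (specNorm_mul_le _ _).trans ?_
          exact mul_le_mul_of_nonneg_right hΦb (specNorm_nonneg _)
        have hnorm2' : specNorm (μ • (Φ * Zt)) ≤ μ * (4 * N * (8 * β ^ (3 * s) * a ^ 3)) := by
          refine hnorm2.trans ?_
          refine mul_le_mul_of_nonneg_left ?_ hμ.le
          have hz : 4 * N * specNorm Zt ^ 2 * specNorm Zt = 4 * N * specNorm Zt ^ 3 := by ring
          rw [hz]
          have h4N : (0:ℝ) ≤ 4 * N := by linarith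
          nlinarith [hz3]
        have htot : specNorm ((1 + μ • F) * (Zt - (1 + μ • F) ^ s * Z0M) - μ • (Φ * Zt))
            ≤ β * (16 / f * N * β ^ (3 * s) * a ^ 3) + 32 * μ * N * β ^ (3 * s) * a ^ 3 := by
          refine (specNorm_sub_le _ _).trans ?_
          have : μ * (4 * N * (8 * β ^ (3 * s) * a ^ 3)) = 32 * μ * N * β ^ (3 * s) * a ^ 3 := by
            ring
          rw [← this]
          exact add_le_add hnorm1 hnorm2'
        refine htot.trans ?_
        have hexp : β ^ (3 * (s + 1)) = β ^ (3 * s) * β ^ 3 := by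
          rw [show 3 * (s + 1) = 3 * s + 3 from by ring, pow_add]
        rw [hexp]
        have hkey : 16 / f * β + 32 * μ ≤ 16 / f * β ^ 3 := by
          have e2 : β - 1 = μ * f := by rw [hβdef]; ring
          have hgf : 16 / f * f = 16 := by field_simp
          have h1 : 16 / f * β ^ 3 - 16 / f * β = 16 * μ * (β * (β + 1)) := by
            have hb3 : β ^ 3 - β = β * (β - 1) * (β + 1) := by ring
            calc 16 / f * β ^ 3 - 16 / f * β = 16 / f * (β ^ 3 - β) := by ring
              _ = 16 / f * (β * (μ * f) * (β + 1)) := by rw [hb3, e2]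
              _ = (16 / f * f) * (μ * (β * (β + 1))) := by ring
              _ = 16 * (μ * (β * (β + 1))) := by rw [hgf]
              _ = 16 * μ * (β * (β + 1)) := by ring
          have e4 : (2:ℝ) ≤ β * (β + 1) := by nlinarith
          have e5 : 32 * μ ≤ 16 * μ * (β * (β + 1)) := by nlinarith
          linarith
        have hfac : (0:ℝ) ≤ N * β ^ (3 * s) * a ^ 3 := by
          have h2 : (0:ℝ) ≤ β ^ (3 * s) := pow_nonneg hβ0.le _
          have h3 : (0:ℝ) ≤ a ^ 3 := pow_nonneg hapos.le 3
          have h4 : (0:ℝ) ≤ N := by linarith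
          exact mul_nonneg (mul_nonneg h4 h2) h3
        calc β * (16 / f * N * β ^ (3 * s) * a ^ 3) + 32 * μ * N * β ^ (3 * s) * a ^ 3
            = (16 / f * β + 32 * μ) * (N * β ^ (3 * s) * a ^ 3) := by ring
          _ ≤ (16 / f * β ^ 3) * (N * β ^ (3 * s) * a ^ 3) :=
              mul_le_mul_of_nonneg_right hkey hfac
          _ = 16 / f * N * (β ^ (3 * s) * β ^ 3) * a ^ 3 := by ring
  exact ⟨main t htle, part2 t htle⟩


end AsymMatrixSensing
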